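/- For symmetric tensors over a vector space, the contraction products commute: if k, l, s are positive integers with l ≤ k and s ≤ k − l, then for any h in the s-th symmetric power of the dual space V*, g in the l-th symmetric power of V*, and f in the k-th symmetric power of V, one has h ·_s (g ·_l f) = g ·_l (h ·_s f). -/

import Mathlib

/-!  We model the symmetric algebra `S V` of `V = ℝ^d` concretely as the polynomial
algebra `ℝ[X_1,…,X_d]`: a vector `f ∈ V` corresponds to the linear polynomial
`lin f = ∑ x, f x • X x`, and the decomposable symmetric tensor `f^{⊙k}` to `(lin f)^k`.
The `l`-contraction with the decomposable dual tensor `g^{⊙l} ∈ S^l V*` corresponds to the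
constant-coefficient differential operator `(l!)⁻¹ • (Dop g)^l`, where
`Dop g = ∑ x, g x • ∂/∂X x`; indeed `(l!)⁻¹ (Dop g)^l (lin f)^k = C(k,l) ⟨g,f⟩^l (lin f)^{k-l}`,
the defining formula of the contraction product.  A general element of `S^l V*` then
corresponds (extension by linearity) to an operator in the span of the `(l!)⁻¹ • (Dop g)^l`. -/

/-- The linear polynomial modelling the vector `f ∈ V` inside the symmetric algebra. -/
noncomputable def lin {d : ℕ} (f : Fin d → ℝ) : MvPolynomial (Fin d) ℝ :=
  ∑ x, MvPolynomial.C (f x) * MvPolynomial.X x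

/-- The first-order contraction operator associated with the covector `g ∈ V*`. -/
noncomputable def Dop {d : ℕ} (g : Fin d → ℝ) :
    Module.End ℝ (MvPolynomial (Fin d) ℝ) :=
  ∑ x, g x • (MvPolynomial.pderiv x).toLinearMap

open MvPolynomial in
lemma pd_comm {d : ℕ} (i j : Fin d) (p : MvPolynomial (Fin d) ℝ) :
    pderiv i (pderiv j p) = pderiv j (pderiv i p) := by
  induction p using MvPolynomial.induction_on' with
  | monomial m a =>
    rcases eq_or_ne i j with rfl | hij
    · rfl
    · simp [pderiv_monomial, Finsupp.sub_apply, Finsupp.single_apply, hij, hij.symm, Ne.symm hij]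
      ring_nf
      rw [tsub_right_comm]
  | add p q hp hq => simp [hp, hq]

lemma dop_comm {d : ℕ} (a b : Fin d → ℝ) : Commute (Dop a) (Dop b) := by
  unfold Dop
  refine Commute.sum_left _ _ _ fun x _ => Commute.sum_right _ _ _ fun y _ => ?_
  refine Commute.smul_left (Commute.smul_right ?_ _) _
  exact LinearMap.ext fun p => pd_comm x y p

/-- For `0 < l ≤ k` and `0 < s ≤ k - l`, the contraction products commute:
`h ·_s (g ·_l f) = g ·_l (h ·_s f)` for all `h ∈ S^s V*`, `g ∈ S^l V*`, `f ∈ S^k V`. -/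
theorem stmt0 {d : ℕ} (k l s : ℕ) (hk : 0 < k) (hl : 0 < l) (hs : 0 < s)
    (hlk : l ≤ k) (hsk : s ≤ k - l)
    (H G : Module.End ℝ (MvPolynomial (Fin d) ℝ))
    (hH : H ∈ Submodule.span ℝ
      {T | ∃ a : Fin d → ℝ, T = ((s.factorial : ℝ)⁻¹) • (Dop a) ^ s})
    (hG : G ∈ Submodule.span ℝ
      {T | ∃ b : Fin d → ℝ, T = ((l.factorial : ℝ)⁻¹) • (Dop b) ^ l})
    (f : MvPolynomial (Fin d) ℝ) (hf : f.IsHomogeneous k) :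
    H (G f) = G (H f) := by
  have key : Commute H G := by
    induction hH using Submodule.span_induction with
    | mem T hT =>
      induction hG using Submodule.span_induction with
      | mem U hU =>
        obtain ⟨a, rfl⟩ := hT
        obtain ⟨b, rfl⟩ := hU
        exact Commute.smul_left (Commute.smul_right ((dop_comm a b).pow_pow s l) _) _
      | zero => exact Commute.zero_right _
      | add U V _ _ h1 h2 => exact Commute.add_right h1 h2
      | smul c U _ h1 => exact h1.smul_right c
    | zero => exact Commute.zero_left _
    | add U V _ _ h1 h2 => exact Commute.add_left h1 h2
    | smul c U _ h1 => exact h1.smul_left c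
  exact congrFun (congrArg DFunLike.coe key) f
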